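/- OPPA induction step identity: given m, n, real τ', τ_n, vectors z', y_m, z_{n+1}, g_n, y_n, x_n, with τ_n = τ' + (1/L_n)(1 + √(1 + 2L_nτ')), x_n = (τ'/τ_n)y_m + ((τ_n - τ')/τ_n)z', y_n = x_n - g_n/L_n, z_{n+1} = z' - (τ_n - τ')g_n, and H' = τ'(f_⋆ - f_m) - (1/2)‖z' - y_⋆‖² + (1/2)‖x_0 - y_⋆‖², H_n = τ_n(f_⋆ - f_n) - (1/2)‖z_{n+1} - y_⋆‖² + (1/2)‖x_0 - y_⋆‖², then H_n = H' + (τ_n - τ')Q_{⋆,n} + τ' Q_{m,n}, where Q_{i,j} = f_i - f_j - ⟨g_j, y_i - y_j⟩ (with y_⋆, f_⋆, g_⋆ = 0 for index ⋆). Consequently, if H' ≥ 0, Q_{⋆,n} ≥ 0 and Q_{m,n} ≥ 0, then H_n ≥ 0. -/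

import Mathlib

open RealInnerProductSpace

/-- OPPA induction step identity
`H_n = H' + (τ_n - τ')Q_{⋆,n} + τ' Q_{m,n}`, and consequently `H_n ≥ 0` whenever
`H' ≥ 0`, `Q_{⋆,n} ≥ 0`, and `Q_{m,n} ≥ 0`. -/
theorem oppa_induction_step {d : ℕ} (L τ' τn fstar fm fn : ℝ)
    (hL : 0 < L) (hτ' : 0 ≤ τ')
    (x0 z' ym zn1 gn yn xn ystar : EuclideanSpace ℝ (Fin d))
    (hτn : τn = τ' + (1 / L) * (1 + Real.sqrt (1 + 2 * L * τ')))
    (hxn : xn = (τ' / τn) • ym + ((τn - τ') / τn) • z')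
    (hyn : yn = xn - (1 / L) • gn)
    (hzn1 : zn1 = z' - (τn - τ') • gn) :
    (τn * (fstar - fn) - (1 / 2) * ‖zn1 - ystar‖ ^ 2 + (1 / 2) * ‖x0 - ystar‖ ^ 2
        = (τ' * (fstar - fm) - (1 / 2) * ‖z' - ystar‖ ^ 2 + (1 / 2) * ‖x0 - ystar‖ ^ 2)
          + (τn - τ') * (fstar - fn - ⟪gn, ystar - yn⟫)
          + τ' * (fm - fn - ⟪gn, ym - yn⟫)) ∧
    (0 ≤ τ' * (fstar - fm) - (1 / 2) * ‖z' - ystar‖ ^ 2 + (1 / 2) * ‖x0 - ystar‖ ^ 2 →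
      0 ≤ fstar - fn - ⟪gn, ystar - yn⟫ →
      0 ≤ fm - fn - ⟪gn, ym - yn⟫ →
      0 ≤ τn * (fstar - fn) - (1 / 2) * ‖zn1 - ystar‖ ^ 2 + (1 / 2) * ‖x0 - ystar‖ ^ 2) := by
  have hs0 : (0:ℝ) ≤ 1 + 2 * L * τ' := by positivity
  have hs : Real.sqrt (1 + 2 * L * τ') ^ 2 = 1 + 2 * L * τ' := Real.sq_sqrt hs0
  have hsnn : 0 ≤ Real.sqrt (1 + 2 * L * τ') := Real.sqrt_nonneg _
  have hτn0 : 0 < τn := by rw [hτn]; positivity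
  have hτn' : τn ≠ 0 := ne_of_gt hτn0
  have hL' : L ≠ 0 := ne_of_gt hL
  have hτnτ' : τ' ≤ τn := by
    have h : 0 ≤ 1 / L * (1 + Real.sqrt (1 + 2 * L * τ')) := by positivity
    rw [hτn]; linarith
  have hkey : L * (τn - τ') ^ 2 = 2 * τn := by
    have h1 : τn - τ' = (1 / L) * (1 + Real.sqrt (1 + 2 * L * τ')) := by rw [hτn]; ring
    rw [h1, hτn]
    field_simp
    nlinarith [hs, Real.sq_sqrt (show (0:ℝ) ≤ 1 + L * 2 * τ' by positivity)]
  -- scalar abbreviations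
  set a := ⟪gn, ym⟫ with ha
  set b := ⟪gn, z'⟫ with hb
  set c := ⟪gn, ystar⟫ with hc
  have hG : ⟪gn, gn⟫ = ‖gn‖ ^ 2 := real_inner_self_eq_norm_sq gn
  have hxni : ⟪gn, xn⟫ = (τ' / τn) * a + ((τn - τ') / τn) * b := by
    rw [hxn, inner_add_right, real_inner_smul_right, real_inner_smul_right]
  have hyni : ⟪gn, yn⟫ = (τ' / τn) * a + ((τn - τ') / τn) * b - (1 / L) * ‖gn‖ ^ 2 := by
    rw [hyn, inner_sub_right, real_inner_smul_right, hxni, hG]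
  have hzi : ‖zn1 - ystar‖ ^ 2
      = ‖z' - ystar‖ ^ 2 - 2 * (τn - τ') * (b - c) + (τn - τ') ^ 2 * ‖gn‖ ^ 2 := by
    have : zn1 - ystar = (z' - ystar) - (τn - τ') • gn := by rw [hzn1]; abel
    rw [this, norm_sub_sq_real, real_inner_smul_right, norm_smul, inner_sub_left,
      real_inner_comm gn z', real_inner_comm gn ystar, ← hb, ← hc]
    simp [Real.norm_eq_abs]
    rw [mul_pow, sq_abs]
    ring
  have h1 : ⟪gn, ystar - yn⟫ = c - ((τ' / τn) * a + ((τn - τ') / τn) * b - (1 / L) * ‖gn‖ ^ 2) := by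
    rw [inner_sub_right, hyni, ← hc]
  have h2 : ⟪gn, ym - yn⟫ = a - ((τ' / τn) * a + ((τn - τ') / τn) * b - (1 / L) * ‖gn‖ ^ 2) := by
    rw [inner_sub_right, hyni, ← ha]
  have haux : (τn - τ') * (b - c) - (1 / 2) * (τn - τ') ^ 2 * ‖gn‖ ^ 2
      + (τn - τ') * ⟪gn, ystar - yn⟫ + τ' * ⟪gn, ym - yn⟫ = 0 := by
    rw [h1, h2]
    field_simp
    linear_combination (-(‖gn‖ ^ 2 * τn)) * hkey
  have hmain : τn * (fstar - fn) - (1 / 2) * ‖zn1 - ystar‖ ^ 2 + (1 / 2) * ‖x0 - ystar‖ ^ 2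
        = (τ' * (fstar - fm) - (1 / 2) * ‖z' - ystar‖ ^ 2 + (1 / 2) * ‖x0 - ystar‖ ^ 2)
          + (τn - τ') * (fstar - fn - ⟪gn, ystar - yn⟫)
          + τ' * (fm - fn - ⟪gn, ym - yn⟫) := by
    rw [hzi]
    linear_combination haux
  refine ⟨hmain, fun hH hQ1 hQ2 => ?_⟩
  rw [hmain]
  have := mul_nonneg (sub_nonneg.2 hτnτ') hQ1
  have := mul_nonneg hτ' hQ2
  linarith
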